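/- arXiv:2205.04413 — 2 statements merged into one kernel-verified Lean document; each statement's English description precedes it below -/
import Mathlib

section
/- Let n ≥ 2, d ≥ 2, and let f_{ij} ∈ C[x_0,...,x_n] (0 ≤ i < j ≤ n) be homogeneous of degree d. Then there exists a homogeneous polynomial f of degree d with f_{ij} = x_i ∂_j f - x_j ∂_i f for all i < j if and only if both x_i f_{jk} - x_j f_{ik} + x_k f_{ij} = 0 and ∂_i f_{jk} - ∂_j f_{ik} + ∂_k f_{ij} = 0 hold for all 0 ≤ i < j < k ≤ n. -/
open MvPolynomial Finset

noncomputable section AuxEig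

namespace AuxEig

variable {N : ℕ}

local notation "RR" => MvPolynomial (Fin N) ℂ

lemma deg_of_mem {p : RR} {m : ℕ} (hp : p.IsHomogeneous m) {d : Fin N →₀ ℕ}
    (hd : coeff d p ≠ 0) : d.degree = m := by
  have := hp hd
  rwa [DFunLike.congr_fun Finsupp.degree_eq_weight_one d]

lemma isHom_of_deg {p : RR} {m : ℕ}
    (hp : ∀ d : Fin N →₀ ℕ, coeff d p ≠ 0 → d.degree = m) : p.IsHomogeneous m := by
  intro d hd
  have e : Finsupp.degree d = (Finsupp.weight 1) d := DFunLike.congr_fun Finsupp.degree_eq_weight_one d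
  rw [← e]
  exact hp d hd

lemma degree_univ (s : Fin N →₀ ℕ) : s.degree = ∑ j, s j :=
  Finset.sum_subset (Finset.subset_univ _) (fun x _ hx => Finsupp.notMem_support_iff.mp hx)

lemma degree_add (s t : Fin N →₀ ℕ) : (s + t).degree = s.degree + t.degree := by
  rw [degree_univ, degree_univ, degree_univ, ← Finset.sum_add_distrib]
  exact Finset.sum_congr rfl fun j _ => Finsupp.add_apply s t j

lemma degree_single (i : Fin N) (k : ℕ) : (Finsupp.single i k).degree = k := by
  rw [degree_univ]
  rw [Finset.sum_congr rfl fun j (_ : j ∈ Finset.univ) => Finsupp.single_apply (a := i) (b := k)]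
  simp

lemma pderiv_comm (i j : Fin N) (p : RR) :
    pderiv i (pderiv j p) = pderiv j (pderiv i p) := by
  induction p using MvPolynomial.induction_on' with
  | monomial s a =>
      rcases eq_or_ne i j with rfl | hij
      · rfl
      · simp only [pderiv_monomial]
        have h1 : (s - Finsupp.single j 1 : Fin N →₀ ℕ) i = s i := by
          rw [Finsupp.tsub_apply, Finsupp.single_apply, if_neg (Ne.symm hij), Nat.sub_zero]
        have h2 : (s - Finsupp.single i 1 : Fin N →₀ ℕ) j = s j := by
          rw [Finsupp.tsub_apply, Finsupp.single_apply, if_neg hij, Nat.sub_zero]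
        rw [h1, h2, tsub_right_comm, mul_right_comm]
  | add p q hp hq => simp [hp, hq]

lemma euler_monomial (s : Fin N →₀ ℕ) (a : ℂ) :
    ∑ i, X i * pderiv i (monomial s a) = C (s.degree : ℂ) * monomial s a := by
  have key : ∀ i : Fin N, X i * pderiv i (monomial s a) = C ((s i : ℂ)) * monomial s a := by
    intro i
    rw [pderiv_monomial]
    rcases Nat.eq_zero_or_pos (s i) with h | h
    · simp [h]
    · have hle : Finsupp.single i 1 ≤ s := by rw [Finsupp.single_le_iff]; omega
      have hidx : Finsupp.single i 1 + (s - Finsupp.single i 1) = s :=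
        add_tsub_cancel_of_le hle
      rw [X, monomial_mul, one_mul, hidx, C_mul_monomial, mul_comm]
  rw [Finset.sum_congr rfl (fun i _ => key i), ← Finset.sum_mul, ← map_sum, degree_univ]
  push_cast
  rfl

lemma euler {p : RR} {m : ℕ} (hp : p.IsHomogeneous m) :
    ∑ i, X i * pderiv i p = C (m : ℂ) * p := by
  have h1 : ∀ i : Fin N, X i * pderiv i p
      = ∑ v ∈ p.support, X i * pderiv i (monomial v (coeff v p)) := by
    intro i
    conv_lhs => rw [p.as_sum]
    rw [map_sum, Finset.mul_sum]
  calc ∑ i, X i * pderiv i p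
      = ∑ v ∈ p.support, ∑ i, X i * pderiv i (monomial v (coeff v p)) := by
        rw [Finset.sum_congr rfl fun i _ => h1 i, Finset.sum_comm]
    _ = ∑ v ∈ p.support, C (m : ℂ) * monomial v (coeff v p) := by
        refine Finset.sum_congr rfl fun v hv => ?_
        rw [euler_monomial, deg_of_mem hp (mem_support_iff.mp hv)]
    _ = C (m : ℂ) * p := by rw [← Finset.mul_sum, ← p.as_sum]

lemma pd_hom {p : RR} {m : ℕ} (hp : p.IsHomogeneous m) (i : Fin N) :
    (pderiv i p).IsHomogeneous (m - 1) := by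
  conv_lhs => rw [p.as_sum]
  rw [map_sum]
  apply IsHomogeneous.sum
  intro v hv
  rw [pderiv_monomial]
  by_cases h : v i = 0
  · simp only [h, Nat.cast_zero, mul_zero, monomial_zero]
    exact isHomogeneous_zero _ _ _
  · apply isHomogeneous_monomial
    have hv' : v.degree = m := deg_of_mem hp (mem_support_iff.mp hv)
    have hle : Finsupp.single i 1 ≤ v := by rw [Finsupp.single_le_iff]; omega
    have hc : (v - Finsupp.single i 1) + Finsupp.single i 1 = v := tsub_add_cancel_of_le hle
    have hdeg := congrArg Finsupp.degree hc
    rw [degree_add, degree_single] at hdeg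
    omega

lemma pderiv_hom0 {p : RR} (hp : p.IsHomogeneous 0) (i : Fin N) : pderiv i p = 0 := by
  conv_lhs => rw [p.as_sum]
  rw [map_sum]
  apply Finset.sum_eq_zero
  intro v hv
  have hv0 : v = 0 := by
    rw [← Finsupp.degree_eq_zero_iff]
    exact deg_of_mem hp (mem_support_iff.mp hv)
  subst hv0
  simp [pderiv_monomial]

lemma hom0_eq_C {p : RR} (hp : p.IsHomogeneous 0) : p = C (coeff 0 p) := by
  apply MvPolynomial.ext
  intro d
  rcases eq_or_ne d 0 with rfl | hd
  · simp
  · rw [coeff_C, if_neg (Ne.symm hd)]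
    by_contra hc
    exact hd ((Finsupp.degree_eq_zero_iff d).mp (deg_of_mem hp hc))


lemma X_dvd_of_coeff (i : Fin N) (p : RR)
    (h : ∀ e : Fin N →₀ ℕ, e i = 0 → coeff e p = 0) : X i ∣ p := by
  classical
  rw [X_dvd_iff_modMonomial_eq_zero]
  apply MvPolynomial.ext
  intro e
  rw [coeff_zero]
  rcases Nat.eq_zero_or_pos (e i) with he | he
  · rw [coeff_modMonomial_of_not_le _ (by rw [Finsupp.single_le_iff]; omega), h e he]
  · rw [coeff_modMonomial_of_le _ (by rw [Finsupp.single_le_iff]; omega)]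

lemma coeff_X_mul_zero {d : Fin N →₀ ℕ} {s : Fin N} (p : RR) (h : d s = 0) :
    coeff d (X s * p) = 0 := by
  classical
  rw [coeff_X_mul', if_neg]
  rw [Finsupp.mem_support_iff]
  simp [h]

/-- substitute 0 for the variable `i` -/
def set0 (i : Fin N) : MvPolynomial (Fin N) ℂ →ₐ[ℂ] MvPolynomial (Fin N) ℂ :=
  aeval (Function.update X i 0)

lemma set0_X_self (i : Fin N) : set0 i (X i) = 0 := by
  rw [set0, aeval_X, Function.update_self]

lemma set0_X_ne (i : Fin N) {j : Fin N} (h : j ≠ i) : set0 i (X j) = X j := by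
  rw [set0, aeval_X, Function.update_of_ne h]

lemma sub_set0_dvd (i : Fin N) (p : RR) : X i ∣ p - set0 i p := by
  induction p using MvPolynomial.induction_on with
  | C a => simp [set0]
  | add p q hp hq =>
      have h : p + q - set0 i (p + q) = (p - set0 i p) + (q - set0 i q) := by
        rw [map_add]; ring
      rw [h]; exact dvd_add hp hq
  | mul_X p j hp =>
      rw [map_mul]
      rcases eq_or_ne j i with rfl | hji
      · rw [set0_X_self, mul_zero, sub_zero]
        exact ⟨p, mul_comm _ _⟩
      · rw [set0_X_ne i hji]
        have h : p * X j - set0 i p * X j = (p - set0 i p) * X j := by ring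
        rw [h]
        exact hp.mul_right _

lemma set0_hom {p : RR} {m : ℕ} (hp : p.IsHomogeneous m) (i : Fin N) :
    (set0 i p).IsHomogeneous m := by
  have := hp.aeval (Function.update X i 0 : Fin N → MvPolynomial (Fin N) ℂ) (n := 1) (fun j => ?_)
  · simpa [set0, aeval_eq_bind₁] using this
  · rcases eq_or_ne j i with rfl | hji
    · rw [Function.update_self]; exact isHomogeneous_zero _ _ _
    · rw [Function.update_of_ne hji]; exact isHomogeneous_X _ _

lemma hom_div_X {m : ℕ} {i : Fin N} {G : RR}
    (hXG : (X i * G).IsHomogeneous (m + 1)) : G.IsHomogeneous m := by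
  apply isHom_of_deg
  intro d hd
  have h2 : coeff (Finsupp.single i 1 + d) (X i * G) ≠ 0 := by rwa [coeff_X_mul]
  have h3 := deg_of_mem hXG h2
  rw [degree_add, degree_single] at h3
  omega

lemma coeff_X_mul_C (a k : Fin N) (c : ℂ) :
    coeff (Finsupp.single k 1) (X a * C c) = if a = k then c else 0 := by
  classical
  rw [mul_comm, coeff_C_mul, coeff_X']
  rcases eq_or_ne a k with rfl | h
  · simp
  · rw [if_neg h, if_neg, mul_zero]
    rw [Finsupp.single_eq_single_iff]
    simp [h]

lemma exists_third (hN : 3 ≤ N) (i j : Fin N) : ∃ k : Fin N, k ≠ i ∧ k ≠ j := by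
  by_contra hcon
  push_neg at hcon
  have key : ∀ a b : Fin N, a ≠ b → a = i ∨ b = i := by
    intro a b hab
    by_contra hc
    push_neg at hc
    exact hab ((hcon a hc.1).trans (hcon b hc.2).symm)
  have h01 : (⟨0, by omega⟩ : Fin N) ≠ ⟨1, by omega⟩ := by simp [Fin.ext_iff]
  have h02 : (⟨0, by omega⟩ : Fin N) ≠ ⟨2, by omega⟩ := by simp [Fin.ext_iff]
  have h12 : (⟨1, by omega⟩ : Fin N) ≠ ⟨2, by omega⟩ := by simp [Fin.ext_iff]
  rcases key _ _ h01 with h0 | h1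
  · rcases key _ _ h12 with h1 | h2
    · exact h01 (h0.trans h1.symm)
    · exact h02 (h0.trans h2.symm)
  · rcases key _ _ h02 with h0 | h2
    · exact h01 (h0.trans h1.symm)
    · exact h12 (h1.trans h2.symm)

lemma full_plucker (A : Fin N → Fin N → RR)
    (hanti : ∀ i j, A i j = - A j i)
    (hpl : ∀ i j k, i < j → j < k → X i * A j k - X j * A i k + X k * A i j = 0) :
    ∀ i j k, i ≠ j → i ≠ k → j ≠ k → X i * A j k - X j * A i k + X k * A i j = 0 := by
  intro i j k hij hik hjk
  rcases lt_trichotomy i j with h1 | h1 | h1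
  · rcases lt_trichotomy j k with h2 | h2 | h2
    · exact hpl i j k h1 h2
    · exact absurd h2 hjk
    · rcases lt_trichotomy i k with h3 | h3 | h3
      · -- i < k < j : (a,c,b) with a=i,b=k,c=j
        linear_combination (-1 : RR) * hpl i k j h3 h2 + X i * hanti j k
      · exact absurd h3 hik
      · -- k < i < j : (b,c,a) with a=k,b=i,c=j
        linear_combination hpl k i j h3 h1 + X i * hanti j k - X j * hanti i k
  · exact absurd h1 hij
  · rcases lt_trichotomy i k with h2 | h2 | h2
    · -- j < i < k : (b,a,c) with a=j,b=i,c=k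
      linear_combination (-1 : RR) * hpl j i k h1 h2 + X k * hanti i j
    · exact absurd h2 hik
    · rcases lt_trichotomy j k with h3 | h3 | h3
      · -- j < k < i : (c,a,b) with a=j,b=k,c=i
        linear_combination hpl j k i h3 h2 + X k * hanti i j - X j * hanti i k
      · exact absurd h3 hjk
      · -- k < j < i : (c,b,a)
        linear_combination (-1 : RR) * hpl k j i h3 h1 + X i * hanti j k
          - X j * hanti i k + X k * hanti i j


lemma e2 (hN : 3 ≤ N) {D : ℕ} (A : Fin N → Fin N → RR)
    (hanti : ∀ i j, A i j = - A j i)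
    (hhom : ∀ i j, (A i j).IsHomogeneous (D + 1))
    (hpl : ∀ i j k, i < j → j < k → X i * A j k - X j * A i k + X k * A i j = 0) :
    ∃ h : Fin N → RR,
      (∀ i, (h i).IsHomogeneous D) ∧ ∀ i j, A i j = X i * h j - X j * h i := by
  classical
  have hfull := full_plucker A hanti hpl
  set z : Fin N := ⟨0, by omega⟩ with hz
  set o : Fin N := ⟨1, by omega⟩ with ho
  set t : Fin N := ⟨2, by omega⟩ with ht
  have hzo : z ≠ o := by simp [hz, ho, Fin.ext_iff]
  have hzt : z ≠ t := by simp [hz, ht, Fin.ext_iff]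
  have hot : o ≠ t := by simp [ho, ht, Fin.ext_iff]
  set φ := set0 z with hφ
  have rel0 : ∀ j k, j ≠ z → k ≠ z → j ≠ k →
      X z * A j k = X j * A z k - X k * A z j := by
    intro j k hj hk hjk
    have := hfull z j k (Ne.symm hj) (Ne.symm hk) hjk
    linear_combination this
  have rel0' : ∀ j k, j ≠ z → k ≠ z → j ≠ k →
      X j * φ (A z k) = X k * φ (A z j) := by
    intro j k hj hk hjk
    have h1 := congrArg φ (rel0 j k hj hk hjk)
    simp only [map_mul, map_sub] at h1
    rw [set0_X_self] at h1
    rw [set0_X_ne z hj, set0_X_ne z hk] at h1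
    linear_combination -h1
  have hdvd1 : X o ∣ φ (A z o) := by
    apply X_dvd_of_coeff
    intro e he
    have h21 := rel0' t o (Ne.symm hzt) (Ne.symm hzo) (Ne.symm hot)
    have h22 := congrArg (coeff (Finsupp.single t 1 + e)) h21
    rw [coeff_X_mul] at h22
    rw [coeff_X_mul_zero] at h22
    · exact h22
    · rw [Finsupp.add_apply, Finsupp.single_apply, if_neg (Ne.symm hot), he]
  obtain ⟨G, hG⟩ := hdvd1
  have hA'k : ∀ k, k ≠ z → φ (A z k) = X k * G := by
    intro k hk
    rcases eq_or_ne k o with rfl | hk1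
    · exact hG
    · have h1 := rel0' o k (Ne.symm hzo) hk (Ne.symm hk1)
      rw [hG] at h1
      apply mul_left_cancel₀ (X_ne_zero (o : Fin N))
      rw [h1]; ring
  have hH : ∀ j : Fin N, ∃ H, A z j - φ (A z j) = X z * H := fun j => sub_set0_dvd z (A z j)
  choose H hHeq using hH
  set h : Fin N → RR := fun i => if i = z then -G else H i with hhdef
  have key0 : ∀ j, j ≠ z → A z j = X z * h j - X j * h z := by
    intro j hj
    have e1 := hHeq j
    have e2 := hA'k j hj
    simp only [hhdef, if_neg hj, if_pos rfl]
    linear_combination e1 + e2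
  have hGhom : G.IsHomogeneous D := by
    apply hom_div_X (i := o)
    rw [← hG]
    exact set0_hom (hhom z o) z
  have hhomh : ∀ i, (h i).IsHomogeneous D := by
    intro i
    rcases eq_or_ne i z with rfl | hi
    · simp only [hhdef, if_pos rfl]
      exact hGhom.neg
    · simp only [hhdef, if_neg hi]
      apply hom_div_X (i := z)
      rw [← hHeq i]
      exact (hhom z i).sub (set0_hom (hhom z i) z)
  refine ⟨h, hhomh, ?_⟩
  have hAzero : ∀ i, A i i = 0 := by
    intro i
    have h1 := hanti i i
    have h2 : (2 : RR) * A i i = 0 := by linear_combination h1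
    rcases mul_eq_zero.mp h2 with h3 | h3
    · exact absurd h3 two_ne_zero
    · exact h3
  intro i j
  rcases eq_or_ne i j with rfl | hij
  · rw [hAzero]; ring
  · rcases eq_or_ne i z with rfl | hi0
    · exact key0 j (Ne.symm hij)
    · rcases eq_or_ne j z with rfl | hj0
      · linear_combination hanti i z - key0 i hi0
      · have e := rel0 i j hi0 hj0 hij
        rw [key0 i hi0, key0 j hj0] at e
        apply mul_left_cancel₀ (X_ne_zero (z : Fin N))
        linear_combination e

lemma const_plucker (hN : 3 ≤ N) (A : Fin N → Fin N → RR)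
    (hanti : ∀ i j, A i j = - A j i)
    (hconst : ∀ i j, (A i j).IsHomogeneous 0)
    (hpl : ∀ i j k, i < j → j < k → X i * A j k - X j * A i k + X k * A i j = 0) :
    ∀ i j, A i j = 0 := by
  have hfull := full_plucker A hanti hpl
  have hAzero : ∀ i, A i i = 0 := by
    intro i
    have h2 : (2 : RR) * A i i = 0 := by linear_combination hanti i i
    rcases mul_eq_zero.mp h2 with h3 | h3
    · exact absurd h3 two_ne_zero
    · exact h3
  intro i j
  rcases eq_or_ne i j with rfl | hij
  · exact hAzero i
  obtain ⟨k, hki, hkj⟩ := exists_third hN i j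
  have e := hfull k i j hki hkj hij
  rw [hom0_eq_C (hconst i j), hom0_eq_C (hconst k j), hom0_eq_C (hconst k i)] at e
  have e2 := congrArg (coeff (Finsupp.single k 1)) e
  simp only [coeff_sub, coeff_add, coeff_zero] at e2
  rw [coeff_X_mul_C, coeff_X_mul_C, coeff_X_mul_C] at e2
  rw [if_pos rfl, if_neg (Ne.symm hki), if_neg (Ne.symm hkj)] at e2
  rw [hom0_eq_C (hconst i j)]
  have : coeff 0 (A i j) = 0 := by linear_combination e2
  rw [this, map_zero]


lemma pderiv_XmulsubXmul {i a b : Fin N} (ha : a ≠ i) (hb : b ≠ i) (u v : RR) :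
    pderiv i (X a * u - X b * v) = X a * pderiv i u - X b * pderiv i v := by
  rw [map_sub, pderiv_mul, pderiv_mul, pderiv_X_of_ne ha, pderiv_X_of_ne hb]
  ring

lemma poincare {δ : ℕ} (h : Fin N → RR) (hhom : ∀ i, (h i).IsHomogeneous δ)
    (hclosed : ∀ i j, pderiv i (h j) = pderiv j (h i)) :
    ∃ f : RR, f.IsHomogeneous (δ + 1) ∧ ∀ i, pderiv i f = h i := by
  refine ⟨C (((δ : ℂ) + 1))⁻¹ * ∑ i, X i * h i, ?_, ?_⟩
  · have h1 : (∑ i, X i * h i).IsHomogeneous (δ + 1) := by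
      apply IsHomogeneous.sum
      intro i _
      have := (isHomogeneous_X ℂ i).mul (hhom i)
      rwa [add_comm] at this
    exact h1.C_mul _
  · intro j
    rw [pderiv_C_mul, map_sum]
    have hterm : ∀ i : Fin N, pderiv j (X i * h i)
        = (if i = j then h i else 0) + X i * pderiv j (h i) := by
      intro i
      rw [pderiv_mul]
      rcases eq_or_ne i j with rfl | hij
      · rw [pderiv_X_self, if_pos rfl]; ring
      · rw [pderiv_X_of_ne hij, if_neg hij]; ring
    rw [Finset.sum_congr rfl fun i _ => hterm i, Finset.sum_add_distrib,
      Finset.sum_ite_eq' Finset.univ j _]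
    simp only [Finset.mem_univ, if_true]
    have h2 : ∑ i, X i * pderiv j (h i) = ∑ i, X i * pderiv i (h j) :=
      Finset.sum_congr rfl fun i _ => by rw [hclosed i j]
    rw [h2, euler (hhom j)]
    have h3 : h j + C ((δ : ℂ)) * h j = C ((δ : ℂ) + 1) * h j := by
      rw [map_add, C_1]; ring
    have hne : ((δ : ℂ) + 1) ≠ 0 := by
      have := Nat.cast_add_one_ne_zero (R := ℂ) δ
      push_cast at this
      exact this
    rw [h3, ← mul_assoc, ← C_mul, inv_mul_cancel₀ hne, C_1, one_mul]

lemma key (hN : 3 ≤ N) : ∀ δ : ℕ, ∀ h : Fin N → RR, (∀ i, (h i).IsHomogeneous δ) →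
    (∀ i j k : Fin N, i < j → j < k →
      X i * (pderiv j (h k) - pderiv k (h j)) - X j * (pderiv i (h k) - pderiv k (h i))
        + X k * (pderiv i (h j) - pderiv j (h i)) = 0) →
    ∃ f g : RR, f.IsHomogeneous (δ + 1) ∧ ∀ i, h i = pderiv i f + g * X i := by
  intro δ
  induction δ using Nat.strong_induction_on with
  | _ δ ih =>
  intro h hhom hpl
  rcases Nat.lt_or_ge δ 2 with hδ | hδ
  · -- low degree: the curl is a constant family, hence zero
    have hcurlhom : ∀ i j : Fin N,
        (pderiv i (h j) - pderiv j (h i)).IsHomogeneous 0 := by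
      intro i j
      have h1 := (pd_hom (hhom j) i).sub (pd_hom (hhom i) j)
      interval_cases δ
      · simpa using h1
      · simpa using h1
    have hzero := const_plucker hN (fun i j => pderiv i (h j) - pderiv j (h i))
      (fun i j => by ring) hcurlhom hpl
    have hclosed : ∀ i j, pderiv i (h j) = pderiv j (h i) := by
      intro i j
      have := hzero i j
      linear_combination this
    obtain ⟨f, hfhom, hf⟩ := poincare h hhom hclosed
    exact ⟨f, 0, hfhom, fun i => by rw [hf i]; ring⟩
  · obtain ⟨e, rfl⟩ : ∃ e, δ = e + 2 := ⟨δ - 2, by omega⟩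
    -- the curl T is homogeneous of degree e+1, antisymmetric, satisfies Plücker
    have hThom : ∀ i j : Fin N,
        (pderiv i (h j) - pderiv j (h i)).IsHomogeneous (e + 1) := by
      intro i j
      have h1 := (pd_hom (hhom j) i).sub (pd_hom (hhom i) j)
      simpa using h1
    obtain ⟨ζ, hζhom, hζ⟩ := e2 hN (fun i j => pderiv i (h j) - pderiv j (h i))
      (fun i j => by ring) hThom hpl
    -- Plücker for the curl of ζ
    have hζpl : ∀ i j k : Fin N, i < j → j < k →
        X i * (pderiv j (ζ k) - pderiv k (ζ j)) - X j * (pderiv i (ζ k) - pderiv k (ζ i))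
          + X k * (pderiv i (ζ j) - pderiv j (ζ i)) = 0 := by
      intro i j k hij hjk
      have hij' : i ≠ j := ne_of_lt hij
      have hjk' : j ≠ k := ne_of_lt hjk
      have hik' : i ≠ k := ne_of_lt (hij.trans hjk)
      have E1 : pderiv i (pderiv j (h k)) - pderiv i (pderiv k (h j))
          = X j * pderiv i (ζ k) - X k * pderiv i (ζ j) := by
        rw [← map_sub, hζ j k, pderiv_XmulsubXmul (Ne.symm hij') (Ne.symm hik')]
      have E2 : pderiv j (pderiv i (h k)) - pderiv j (pderiv k (h i))
          = X i * pderiv j (ζ k) - X k * pderiv j (ζ i) := by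
        rw [← map_sub, hζ i k, pderiv_XmulsubXmul hij' (Ne.symm hjk')]
      have E3 : pderiv k (pderiv i (h j)) - pderiv k (pderiv j (h i))
          = X i * pderiv k (ζ j) - X j * pderiv k (ζ i) := by
        rw [← map_sub, hζ i j, pderiv_XmulsubXmul hik' hjk']
      have C1 := pderiv_comm i j (h k)
      have C2 := pderiv_comm i k (h j)
      have C3 := pderiv_comm j k (h i)
      linear_combination E1 - E2 + E3 - C1 + C2 - C3
    obtain ⟨u, v, huhom, huv⟩ := ih e (by omega) ζ hζhom hζpl
    -- β := h + u • e  is closed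
    set β : Fin N → RR := fun i => h i + u * X i with hβ
    have hβhom : ∀ i, (β i).IsHomogeneous (e + 2) := by
      intro i
      exact (hhom i).add (huhom.mul (isHomogeneous_X ℂ i))
    have hβclosed : ∀ i j, pderiv i (β j) = pderiv j (β i) := by
      intro i j
      rcases eq_or_ne i j with rfl | hij
      · rfl
      · simp only [hβ]
        rw [map_add, map_add, pderiv_mul, pderiv_mul,
          pderiv_X_of_ne (Ne.symm hij), pderiv_X_of_ne hij]
        have e1 := hζ i j
        have e2 := huv i
        have e3 := huv j
        linear_combination e1 + X i * e3 - X j * e2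
    obtain ⟨f, hfhom, hf⟩ := poincare β hβhom hβclosed
    refine ⟨f, -u, hfhom, fun i => ?_⟩
    have := hf i
    simp only [hβ] at this
    linear_combination -this

end AuxEig

end AuxEig

open MvPolynomial

theorem equations_symmetric (n d : ℕ) (hn : 2 ≤ n) (hd : 2 ≤ d)
    (F : Fin (n + 1) → Fin (n + 1) → MvPolynomial (Fin (n + 1)) ℂ)
    (hFhom : ∀ i j : Fin (n + 1), i < j → (F i j).IsHomogeneous d) :
    (∃ f : MvPolynomial (Fin (n + 1)) ℂ, f.IsHomogeneous d ∧
      ∀ i j : Fin (n + 1), i < j → F i j = X i * pderiv j f - X j * pderiv i f) ↔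
    ((∀ i j k : Fin (n + 1), i < j → j < k →
        X i * F j k - X j * F i k + X k * F i j = 0) ∧
     (∀ i j k : Fin (n + 1), i < j → j < k →
        pderiv i (F j k) - pderiv j (F i k) + pderiv k (F i j) = 0)) := by
  classical
  constructor
  · rintro ⟨f, hf, hF⟩
    constructor
    · intro i j k hij hjk
      rw [hF j k hjk, hF i k (hij.trans hjk), hF i j hij]
      ring
    · intro i j k hij hjk
      have hij' : i ≠ j := ne_of_lt hij
      have hjk' : j ≠ k := ne_of_lt hjk
      have hik' : i ≠ k := ne_of_lt (hij.trans hjk)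
      rw [hF j k hjk, hF i k (hij.trans hjk), hF i j hij]
      rw [AuxEig.pderiv_XmulsubXmul (Ne.symm hij') (Ne.symm hik'),
          AuxEig.pderiv_XmulsubXmul hij' (Ne.symm hjk'),
          AuxEig.pderiv_XmulsubXmul hik' hjk']
      have Cik := AuxEig.pderiv_comm i k f
      have Cij := AuxEig.pderiv_comm i j f
      have Cjk := AuxEig.pderiv_comm j k f
      linear_combination X j * Cik - X k * Cij - X i * Cjk
  · rintro ⟨h1, h2⟩
    have hN : 3 ≤ n + 1 := by omega
    obtain ⟨D, rfl⟩ : ∃ D, d = D + 1 := ⟨d - 1, by omega⟩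
    set A : Fin (n + 1) → Fin (n + 1) → MvPolynomial (Fin (n + 1)) ℂ :=
      fun i j => if i < j then F i j else if j < i then -F j i else 0 with hA
    have hanti : ∀ i j, A i j = - A j i := by
      intro i j
      rcases lt_trichotomy i j with hlt | rfl | hlt
      · simp [hA, hlt, lt_asymm hlt]
      · simp [hA]
      · simp [hA, hlt, lt_asymm hlt]
    have hAhom : ∀ i j, (A i j).IsHomogeneous (D + 1) := by
      intro i j
      rcases lt_trichotomy i j with hlt | rfl | hlt
      · simpa [hA, hlt, lt_asymm hlt] using hFhom i j hlt
      · simpa [hA] using isHomogeneous_zero (Fin (n+1)) ℂ (D + 1)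
      · simpa [hA, hlt, lt_asymm hlt] using (hFhom j i hlt).neg
    have hApl : ∀ i j k, i < j → j < k → X i * A j k - X j * A i k + X k * A i j = 0 := by
      intro i j k hij hjk
      have hik := hij.trans hjk
      simp only [hA, if_pos hij, if_pos hjk, if_pos hik]
      exact h1 i j k hij hjk
    obtain ⟨h, hhom, hAh⟩ := AuxEig.e2 hN A hanti hAhom hApl
    have eF : ∀ a b, a < b → F a b = X a * h b - X b * h a := by
      intro a b hab
      have e := hAh a b
      simpa [hA, hab] using e
    have hkey : ∀ i j k : Fin (n + 1), i < j → j < k →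
        X i * (pderiv j (h k) - pderiv k (h j)) - X j * (pderiv i (h k) - pderiv k (h i))
          + X k * (pderiv i (h j) - pderiv j (h i)) = 0 := by
      intro i j k hij hjk
      have hik := hij.trans hjk
      have hij' : i ≠ j := ne_of_lt hij
      have hjk' : j ≠ k := ne_of_lt hjk
      have hik' : i ≠ k := ne_of_lt hik
      have e := h2 i j k hij hjk
      rw [eF j k hjk, eF i k hik, eF i j hij] at e
      rw [AuxEig.pderiv_XmulsubXmul (Ne.symm hij') (Ne.symm hik'),
          AuxEig.pderiv_XmulsubXmul hij' (Ne.symm hjk'),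
          AuxEig.pderiv_XmulsubXmul hik' hjk'] at e
      linear_combination -e
    obtain ⟨f, g, hfhom, hfg⟩ := AuxEig.key hN D h hhom hkey
    refine ⟨f, hfhom, ?_⟩
    intro i j hij
    rw [eF i j hij, hfg i, hfg j]
    ring
end

section
/- Let n ≥ 2, d ≥ 2, and let g_0,...,g_n ∈ C[x_0,...,x_n] be homogeneous of degree d-1 such that the scheme of common zeros of the f_{ij} = x_i g_j - x_j g_i is finite. Then no d+1 distinct points of this zero locus are collinear in P^n. -/
open MvPolynomial

lemma eval_smul_of_isHomogeneous {σ : Type*} {m : ℕ} (f : MvPolynomial σ ℂ)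
    (hf : f.IsHomogeneous m) (c : ℂ) (x : σ → ℂ) :
    eval (c • x) f = c ^ m * eval x f := by
  rw [eval_eq, eval_eq, Finset.mul_sum]
  apply Finset.sum_congr rfl
  intro u hu
  have hdeg : ∑ i ∈ u.support, u i = m := by
    have h1 : Finsupp.degree u = m := by
      rw [Finsupp.degree_eq_weight_one]
      exact hf (mem_support_iff.mp hu)
    rwa [Finsupp.degree_apply] at h1
  have : ∏ i ∈ u.support, (c • x) i ^ u i
      = c ^ m * ∏ i ∈ u.support, x i ^ u i := by
    simp only [Pi.smul_apply, smul_eq_mul, mul_pow]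
    rw [Finset.prod_mul_distrib, Finset.prod_pow_eq_pow_sum, hdeg]
  rw [this]; ring

lemma natDegree_aeval_affine {σ : Type*} (f : MvPolynomial σ ℂ) {m : ℕ}
    (hf : f.totalDegree ≤ m) (v w : σ → ℂ) :
    (aeval (fun k => Polynomial.C (v k) + Polynomial.C (w k) * Polynomial.X) f).natDegree ≤ m := by
  conv_lhs => rw [f.as_sum, map_sum]
  apply Polynomial.natDegree_sum_le_of_forall_le
  intro u hu
  rw [aeval_monomial]
  refine le_trans (Polynomial.natDegree_mul_le) ?_
  have h0 : (algebraMap ℂ (Polynomial ℂ) (coeff u f)).natDegree = 0 := by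
    simp [Polynomial.algebraMap_eq]
  rw [h0, zero_add]
  refine le_trans (Polynomial.natDegree_prod_le _ _) ?_
  have step : ∀ i ∈ u.support,
      ((Polynomial.C (v i) + Polynomial.C (w i) * Polynomial.X) ^ u i).natDegree ≤ u i := by
    intro i _
    refine Polynomial.natDegree_pow_le.trans ?_
    have h1 : (Polynomial.C (v i) + Polynomial.C (w i) * Polynomial.X).natDegree ≤ 1 := by
      refine (Polynomial.natDegree_add_le _ _).trans ?_
      simp only [Polynomial.natDegree_C, max_le_iff]
      exact ⟨Nat.zero_le _, le_trans (Polynomial.natDegree_C_mul_le _ _) Polynomial.natDegree_X_le⟩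
    calc u i * (Polynomial.C (v i) + Polynomial.C (w i) * Polynomial.X).natDegree
        ≤ u i * 1 := Nat.mul_le_mul_left _ h1
      _ = u i := Nat.mul_one _
  refine le_trans (Finset.sum_le_sum step) ?_
  refine le_trans ?_ hf
  simpa [Finsupp.sum] using MvPolynomial.le_totalDegree hu

lemma eval_aeval_affine {σ : Type*} (q : MvPolynomial σ ℂ) (v w : σ → ℂ) (s : ℂ) :
    Polynomial.eval s (aeval (fun k => Polynomial.C (v k) + Polynomial.C (w k) * Polynomial.X) q)
      = eval (v + s • w) q := by
  induction q using MvPolynomial.induction_on with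
  | C a => simp
  | add p q hp hq => simp [hp, hq]
  | mul_X p i hp =>
      simp only [map_mul, aeval_X, Polynomial.eval_mul, Polynomial.eval_add, Polynomial.eval_C,
        Polynomial.eval_X, hp, eval_mul, eval_X, Pi.add_apply, Pi.smul_apply, smul_eq_mul]
      ring

theorem no_collinear_points_in_eigenscheme (n d : ℕ) (hn : 2 ≤ n) (hd : 2 ≤ d)
    (g : Fin (n + 1) → MvPolynomial (Fin (n + 1)) ℂ)
    (hg : ∀ i, (g i).IsHomogeneous (d - 1))
    (hfin : Set.Finite {p : Projectivization ℂ (Fin (n + 1) → ℂ) |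
      ∀ i j : Fin (n + 1), eval p.rep (X i * g j - X j * g i) = 0}) :
    ∀ S : Finset (Projectivization ℂ (Fin (n + 1) → ℂ)),
      (↑S : Set (Projectivization ℂ (Fin (n + 1) → ℂ))) ⊆
        {p : Projectivization ℂ (Fin (n + 1) → ℂ) |
          ∀ i j : Fin (n + 1), eval p.rep (X i * g j - X j * g i) = 0} →
      S.card = d + 1 →
      ¬ ∃ W : Submodule ℂ (Fin (n + 1) → ℂ), Module.finrank ℂ W = 2 ∧
          ∀ p ∈ S, Projectivization.submodule p ≤ W := by
  intro S hS hcard ⟨W, hW2, hWle⟩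
  classical
  have hfhom : ∀ i j : Fin (n + 1),
      (X i * g j - X j * g i : MvPolynomial (Fin (n + 1)) ℂ).IsHomogeneous d := by
    intro i j
    have h1 : (X i * g j : MvPolynomial (Fin (n + 1)) ℂ).IsHomogeneous d := by
      have := (isHomogeneous_X ℂ i).mul (hg j)
      rwa [show 1 + (d - 1) = d by omega] at this
    have h2 : (X j * g i : MvPolynomial (Fin (n + 1)) ℂ).IsHomogeneous d := by
      have := (isHomogeneous_X ℂ j).mul (hg i)
      rwa [show 1 + (d - 1) = d by omega] at this
    exact h1.sub h2
  have hrepW : ∀ p ∈ S, p.rep ∈ W := by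
    intro p hp
    refine hWle p hp ?_
    rw [Projectivization.submodule_eq]
    exact Submodule.mem_span_singleton_self _
  -- two distinct points of S give a basis of W
  obtain ⟨p₀, hp₀, p₁, hp₁, hne⟩ := Finset.one_lt_card.mp (by omega : 1 < S.card)
  set e1 := p₀.rep with he1
  set e2 := p₁.rep with he2
  have hli : LinearIndependent ℂ ![e1, e2] := by
    have h0 := Projectivization.independent_iff.mp
      ((Projectivization.independent_pair_iff_ne p₀ p₁).mpr hne)
    have h1 : (Projectivization.rep ∘ ![p₀, p₁]) = ![e1, e2] := by
      ext i; fin_cases i <;> rfl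
    rwa [h1] at h0
  have hind : ∀ x y : ℂ, x • e1 + y • e2 = 0 → x = 0 ∧ y = 0 :=
    LinearIndependent.pair_iff.mp hli
  have hspan : W = Submodule.span ℂ {e1, e2} := by
    have hle : Submodule.span ℂ {e1, e2} ≤ W := by
      rw [Submodule.span_le]
      rintro z hz
      rcases hz with rfl | hz
      · exact hrepW p₀ hp₀
      · rcases hz with rfl
        exact hrepW p₁ hp₁
    have hfr : Module.finrank ℂ (Submodule.span ℂ ({e1, e2} : Set (Fin (n + 1) → ℂ))) = 2 := by
      have hr : ({e1, e2} : Set (Fin (n + 1) → ℂ)) = Set.range ![e1, e2] := by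
        simp [Matrix.range_cons, Matrix.range_empty, Set.pair_comm]
      rw [hr, finrank_span_eq_card hli]
      simp
    exact (Submodule.eq_of_le_of_finrank_le hle (by rw [hfr, hW2])).symm
  -- coordinates on W
  have hcoord : ∀ p ∈ S, ∃ x y : ℂ, x • e1 + y • e2 = p.rep := by
    intro p hp
    have := hrepW p hp
    rw [hspan] at this
    exact Submodule.mem_span_pair.mp this
  choose! a b hab using hcoord
  -- choose a direction on the line avoiding all points of S
  obtain ⟨c, hc⟩ := Infinite.exists_notMem_finset (S.image fun p => b p / a p)
  set w : Fin (n + 1) → ℂ := e1 + c • e2 with hw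
  set v : Fin (n + 1) → ℂ := e2 with hv
  have hwnot : ∀ p ∈ S, ∀ l : ℂ, p.rep ≠ l • w := by
    intro p hp l heq
    have hx : a p • e1 + b p • e2 = l • e1 + (l * c) • e2 := by
      rw [hab p hp, heq, hw]; module
    have h0 : l - a p = 0 ∧ l * c - b p = 0 := by
      refine hind _ _ ?_
      have h1 : (l - a p) • e1 + (l * c - b p) • e2
          = (l • e1 + (l * c) • e2) - (a p • e1 + b p • e2) := by module
      rw [h1, ← hx, sub_self]
    have hl : l ≠ 0 := by
      intro h
      apply p.rep_nonzero
      rw [heq, h, zero_smul]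
    have ha0 : a p = l := (sub_eq_zero.mp h0.1).symm
    have hb0 : b p = l * c := (sub_eq_zero.mp h0.2).symm
    apply hc
    refine Finset.mem_image.mpr ⟨p, hp, ?_⟩
    rw [ha0, hb0]
    field_simp
  have hind2 : ∀ x y : ℂ, x • v + y • w = 0 → x = 0 ∧ y = 0 := by
    intro x y h
    have h' : y • e1 + (x + y * c) • e2 = 0 := by
      rw [← h, hv, hw]; module
    obtain ⟨hy, hxy⟩ := hind _ _ h'
    refine ⟨?_, hy⟩
    rw [hy, zero_mul, add_zero] at hxy
    exact hxy
  have hvwne : ∀ s : ℂ, v + s • w ≠ 0 := by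
    intro s h
    exact one_ne_zero (hind2 1 s (by rw [one_smul]; exact h)).1
  -- parametrize the points of S on the line
  have hexists : ∀ p ∈ S, ∃ t α : ℂ, α ≠ 0 ∧ p.rep = α • (v + t • w) := by
    intro p hp
    have hrepc : p.rep = (b p - a p * c) • v + a p • w := by
      rw [← hab p hp, hv, hw]; module
    set B := b p - a p * c with hB'
    have hB : B ≠ 0 := by
      intro h
      exact hwnot p hp (a p) (by rw [hrepc, h, zero_smul, zero_add])
    refine ⟨a p / B, B, hB, ?_⟩
    rw [hrepc]
    match_scalars <;> field_simp
  choose! t α hα hrep using hexists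
  have hinjt : Set.InjOn t ↑S := by
    intro p hp q hq htpq
    rw [Finset.mem_coe] at hp hq
    have hαp := hα p hp
    have hαq := hα q hq
    have h1 : ((α p / α q) : ℂ) • q.rep = p.rep := by
      rw [hrep p hp, hrep q hq, htpq, smul_smul, div_mul_cancel₀ _ hαq]
    calc p = Projectivization.mk ℂ p.rep p.rep_nonzero := (Projectivization.mk_rep p).symm
      _ = Projectivization.mk ℂ q.rep q.rep_nonzero := by
          rw [Projectivization.mk_eq_mk_iff]
          exact ⟨Units.mk0 (α p / α q) (div_ne_zero hαp hαq), h1⟩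
      _ = q := Projectivization.mk_rep q
  have hEzero : ∀ p ∈ S, ∀ i j : Fin (n + 1),
      eval (v + t p • w) (X i * g j - X j * g i) = 0 := by
    intro p hp i j
    have h0 := hS (Finset.mem_coe.mpr hp) i j
    rw [hrep p hp, eval_smul_of_isHomogeneous _ (hfhom i j)] at h0
    exact (mul_eq_zero.mp h0).resolve_left (pow_ne_zero _ (hα p hp))
  set φ : Fin (n + 1) → Polynomial ℂ :=
    fun k => Polynomial.C (v k) + Polynomial.C (w k) * Polynomial.X with hφ
  by_cases hF : ∀ i j : Fin (n + 1), aeval φ (X i * g j - X j * g i) = 0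
  · -- every point of the line is in the eigenscheme: contradicts finiteness
    have hmem : ∀ s : ℂ, Projectivization.mk ℂ (v + s • w) (hvwne s) ∈
        {p : Projectivization ℂ (Fin (n + 1) → ℂ) |
          ∀ i j : Fin (n + 1), eval p.rep (X i * g j - X j * g i) = 0} := by
      intro s i j
      obtain ⟨u, hu⟩ := Projectivization.exists_smul_eq_mk_rep ℂ (v + s • w) (hvwne s)
      rw [← hu, Units.smul_def, eval_smul_of_isHomogeneous _ (hfhom i j)]
      have h1 := congrArg (Polynomial.eval s) (hF i j)
      rw [hφ, eval_aeval_affine] at h1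
      simp only [Polynomial.eval_zero] at h1
      rw [h1, mul_zero]
    have hinj2 : Function.Injective fun s : ℂ => Projectivization.mk ℂ (v + s • w) (hvwne s) := by
      intro s s' h
      simp only [Projectivization.mk_eq_mk_iff] at h
      obtain ⟨u, hu⟩ := h
      have h0 : ((u : ℂ) - 1) • v + ((u : ℂ) * s' - s) • w = 0 := by
        have h1 : ((u : ℂ) - 1) • v + ((u : ℂ) * s' - s) • w
            = (u : ℂ) • (v + s' • w) - (v + s • w) := by module
        have hu' : (u : ℂ) • (v + s' • w) = v + s • w := by
          rw [← Units.smul_def]; exact hu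
        rw [h1, hu', sub_self]
      obtain ⟨hu1, hu2⟩ := hind2 _ _ h0
      have : (u : ℂ) = 1 := by rwa [sub_eq_zero] at hu1
      rw [this, one_mul] at hu2
      exact (sub_eq_zero.mp hu2).symm
    exact (Set.not_infinite.mpr hfin) (Set.infinite_of_injective_forall_mem hinj2 hmem)
  · -- some restricted minor is a nonzero polynomial of degree ≤ d with d+1 roots
    push_neg at hF
    obtain ⟨i, j, hFne⟩ := hF
    set F : Polynomial ℂ := aeval φ (X i * g j - X j * g i) with hFdef
    have hdeg : F.natDegree ≤ d := natDegree_aeval_affine _ ((hfhom i j).totalDegree_le) v w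
    have himg : S.image t ⊆ F.roots.toFinset := by
      intro x hx
      obtain ⟨p, hp, rfl⟩ := Finset.mem_image.mp hx
      rw [Multiset.mem_toFinset, Polynomial.mem_roots hFne]
      show Polynomial.eval (t p) F = 0
      rw [hFdef, hφ, eval_aeval_affine]
      exact hEzero p hp i j
    have h1 : (S.image t).card = d + 1 := by
      rw [Finset.card_image_of_injOn hinjt, hcard]
    have h2 : (S.image t).card ≤ F.roots.toFinset.card := Finset.card_le_card himg
    have h3 : F.roots.toFinset.card ≤ Multiset.card F.roots := F.roots.toFinset_card_le
    have h4 : Multiset.card F.roots ≤ F.natDegree := F.card_roots'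
    omega
end
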